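/- Define d on the vertices of L_{k,n} by d(A,B) = 2⌈(k - |A∩B|)/(n-2k)⌉ + 1 if |A| ≠ |B|, and d(A,B) = 2⌈(|A| - |A∩B|)/(n-2k)⌉ if |A| = |B|. Then d is a metric on the vertex set (d(A,B)=0 iff A=B; d symmetric; triangle inequality) and d(A,B) = 1 if and only if A and B are adjacent in L_{k,n}. -/

import Mathlib

/-- Vertices of the level graph: k-element and (n-k)-element subsets of {1,…,n}. -/
def LevelVert (n k : ℕ) := {A : Finset (Fin n) // A.card = k ∨ A.card = n - k}

/-- The (k,n)-level graph L_{k,n}. -/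
def levelGraph (n k : ℕ) : SimpleGraph (LevelVert n k) where
  Adj A B := A ≠ B ∧
    ((A.1.card = k ∧ B.1.card = n - k ∧ A.1 ⊆ B.1) ∨
     (B.1.card = k ∧ A.1.card = n - k ∧ B.1 ⊆ A.1))
  symm := by refine ⟨fun A B h => ?_⟩; exact ⟨Ne.symm h.1, h.2.elim Or.inr Or.inl⟩
  loopless := by refine ⟨fun A h => ?_⟩; exact h.1 rfl

/-- The initial vertex P = {1,…,k} (as a subset of Fin n). -/
def Pset (n k : ℕ) : Finset (Fin n) := Finset.univ.filter (fun x => (x : ℕ) < k)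

/-- The distance function d on vertices of the level graph. -/
def dFun (n k : ℕ) (A B : LevelVert n k) : ℕ :=
  if A.1.card = B.1.card then
    2 * ((A.1.card - (A.1 ∩ B.1).card + (n - 2 * k) - 1) / (n - 2 * k))
  else
    2 * ((k - (A.1 ∩ B.1).card + (n - 2 * k) - 1) / (n - 2 * k)) + 1

private lemma ceil_le' {m x q : ℕ} (hm : 0 < m) (h : x ≤ m * q) :
    (x + m - 1) / m ≤ q := by
  rw [Nat.div_le_iff_le_mul_add_pred hm]
  omega

private lemma le_mul_ceil' {m : ℕ} (hm : 0 < m) (x : ℕ) :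
    x ≤ m * ((x + m - 1) / m) := by
  have h := Nat.div_add_mod (x + m - 1) m
  have h2 : (x + m - 1) % m < m := Nat.mod_lt _ hm
  set d := m * ((x + m - 1) / m) with hd
  set r := (x + m - 1) % m with hr
  omega

private lemma ceil_add' {m x y z s : ℕ} (hm : 0 < m) (h : x ≤ y + z + s * m) :
    (x + m - 1) / m ≤ (y + m - 1) / m + (z + m - 1) / m + s := by
  apply ceil_le' hm
  calc x ≤ y + z + s * m := h
    _ ≤ m * ((y + m - 1) / m) + m * ((z + m - 1) / m) + s * m :=
        Nat.add_le_add (Nat.add_le_add (le_mul_ceil' hm y) (le_mul_ceil' hm z)) le_rfl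
    _ = m * ((y + m - 1) / m + (z + m - 1) / m + s) := by ring

private lemma card_tri' {n : ℕ} (A B C : Finset (Fin n)) :
    (A ∩ B).card + (B ∩ C).card ≤ (A ∩ C).card + B.card := by
  have h1 := Finset.card_inter_add_card_union (A ∩ B) (B ∩ C)
  have h2 : (A ∩ B) ∩ (B ∩ C) ⊆ A ∩ C := by
    intro x hx; simp only [Finset.mem_inter] at *; tauto
  have h3 : (A ∩ B) ∪ (B ∩ C) ⊆ B := by
    intro x hx; simp only [Finset.mem_inter, Finset.mem_union] at hx ⊢; tauto
  have := Finset.card_le_card h2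
  have := Finset.card_le_card h3
  omega


theorem dFun_metric (n k : ℕ) (hk : k < n - k) :
    (∀ A B : LevelVert n k, dFun n k A B = 0 ↔ A = B) ∧
    (∀ A B : LevelVert n k, dFun n k A B = dFun n k B A) ∧
    (∀ A B C : LevelVert n k, dFun n k A B + dFun n k B C ≥ dFun n k A C) ∧
    (∀ A B : LevelVert n k, dFun n k A B = 1 ↔ (levelGraph n k).Adj A B) := by
  have hm : 0 < n - 2 * k := by omega
  have hkn : ¬ (k = n - k) := by omega
  have hkn' : ¬ (n - k = k) := by omega
  refine ⟨?_, ?_, ?_, ?_⟩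
  · -- d = 0 ↔ A = B
    intro A B
    constructor
    · intro h0
      by_cases h : A.1.card = B.1.card
      · rw [dFun, if_pos h] at h0
        have h2 : (A.1.card - (A.1 ∩ B.1).card + (n - 2 * k) - 1) / (n - 2 * k) = 0 := by
          omega
        rw [Nat.div_eq_zero_iff] at h2
        have hint : (A.1 ∩ B.1).card ≤ A.1.card :=
          Finset.card_le_card Finset.inter_subset_left
        have hAB : A.1 ∩ B.1 = A.1 :=
          Finset.eq_of_subset_of_card_le Finset.inter_subset_left (by omega)
        have hsub : A.1 ⊆ B.1 := by rw [← hAB]; exact Finset.inter_subset_right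
        exact Subtype.ext (Finset.eq_of_subset_of_card_le hsub (le_of_eq h.symm))
      · rw [dFun, if_neg h] at h0; omega
    · rintro rfl
      rw [dFun, if_pos rfl, Finset.inter_self, Nat.sub_self]
      have : (0 + (n - 2 * k) - 1) / (n - 2 * k) = 0 := Nat.div_eq_of_lt (by omega)
      rw [this]
  · -- symmetry
    intro A B
    by_cases h : A.1.card = B.1.card
    · simp only [dFun, if_pos h, if_pos h.symm, Finset.inter_comm, h]
    · simp only [dFun, if_neg h, if_neg (Ne.symm h), Finset.inter_comm]
  · -- triangle inequality
    intro A B C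
    have h1 := card_tri' A.1 B.1 C.1
    have bAB1 : (A.1 ∩ B.1).card ≤ A.1.card := Finset.card_le_card Finset.inter_subset_left
    have bAB2 : (A.1 ∩ B.1).card ≤ B.1.card := Finset.card_le_card Finset.inter_subset_right
    have bBC1 : (B.1 ∩ C.1).card ≤ B.1.card := Finset.card_le_card Finset.inter_subset_left
    have bBC2 : (B.1 ∩ C.1).card ≤ C.1.card := Finset.card_le_card Finset.inter_subset_right
    have bAC1 : (A.1 ∩ C.1).card ≤ A.1.card := Finset.card_le_card Finset.inter_subset_left
    have bAC2 : (A.1 ∩ C.1).card ≤ C.1.card := Finset.card_le_card Finset.inter_subset_right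
    rcases A.2 with hA | hA <;> rcases B.2 with hB | hB <;> rcases C.2 with hC | hC <;>
      simp only [ge_iff_le, dFun, hA, hB, hC, hkn, hkn', eq_self_iff_true, ite_true,
        ite_false]
    · -- k k k
      have key := ceil_add' (x := k - (A.1 ∩ C.1).card) (y := k - (A.1 ∩ B.1).card)
        (z := k - (B.1 ∩ C.1).card) (s := 0) hm (by omega)
      set c1 := (k - (A.1 ∩ B.1).card + (n - 2 * k) - 1) / (n - 2 * k)
      set c2 := (k - (B.1 ∩ C.1).card + (n - 2 * k) - 1) / (n - 2 * k)
      set c3 := (k - (A.1 ∩ C.1).card + (n - 2 * k) - 1) / (n - 2 * k)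
      omega
    · -- k k K
      have key := ceil_add' (x := k - (A.1 ∩ C.1).card) (y := k - (A.1 ∩ B.1).card)
        (z := k - (B.1 ∩ C.1).card) (s := 0) hm (by omega)
      set c1 := (k - (A.1 ∩ B.1).card + (n - 2 * k) - 1) / (n - 2 * k)
      set c2 := (k - (B.1 ∩ C.1).card + (n - 2 * k) - 1) / (n - 2 * k)
      set c3 := (k - (A.1 ∩ C.1).card + (n - 2 * k) - 1) / (n - 2 * k)
      omega
    · -- k K k
      have key := ceil_add' (x := k - (A.1 ∩ C.1).card) (y := k - (A.1 ∩ B.1).card)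
        (z := k - (B.1 ∩ C.1).card) (s := 1) hm (by omega)
      set c1 := (k - (A.1 ∩ B.1).card + (n - 2 * k) - 1) / (n - 2 * k)
      set c2 := (k - (B.1 ∩ C.1).card + (n - 2 * k) - 1) / (n - 2 * k)
      set c3 := (k - (A.1 ∩ C.1).card + (n - 2 * k) - 1) / (n - 2 * k)
      omega
    · -- k K K
      have key := ceil_add' (x := k - (A.1 ∩ C.1).card) (y := k - (A.1 ∩ B.1).card)
        (z := n - k - (B.1 ∩ C.1).card) (s := 0) hm (by omega)
      set c1 := (k - (A.1 ∩ B.1).card + (n - 2 * k) - 1) / (n - 2 * k)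
      set c2 := (n - k - (B.1 ∩ C.1).card + (n - 2 * k) - 1) / (n - 2 * k)
      set c3 := (k - (A.1 ∩ C.1).card + (n - 2 * k) - 1) / (n - 2 * k)
      omega
    · -- K k k
      have key := ceil_add' (x := k - (A.1 ∩ C.1).card) (y := k - (A.1 ∩ B.1).card)
        (z := k - (B.1 ∩ C.1).card) (s := 0) hm (by omega)
      set c1 := (k - (A.1 ∩ B.1).card + (n - 2 * k) - 1) / (n - 2 * k)
      set c2 := (k - (B.1 ∩ C.1).card + (n - 2 * k) - 1) / (n - 2 * k)
      set c3 := (k - (A.1 ∩ C.1).card + (n - 2 * k) - 1) / (n - 2 * k)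
      omega
    · -- K k K
      have key := ceil_add' (x := n - k - (A.1 ∩ C.1).card) (y := k - (A.1 ∩ B.1).card)
        (z := k - (B.1 ∩ C.1).card) (s := 1) hm (by omega)
      set c1 := (k - (A.1 ∩ B.1).card + (n - 2 * k) - 1) / (n - 2 * k)
      set c2 := (k - (B.1 ∩ C.1).card + (n - 2 * k) - 1) / (n - 2 * k)
      set c3 := (n - k - (A.1 ∩ C.1).card + (n - 2 * k) - 1) / (n - 2 * k)
      omega
    · -- K K k
      have key := ceil_add' (x := k - (A.1 ∩ C.1).card) (y := n - k - (A.1 ∩ B.1).card)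
        (z := k - (B.1 ∩ C.1).card) (s := 0) hm (by omega)
      set c1 := (n - k - (A.1 ∩ B.1).card + (n - 2 * k) - 1) / (n - 2 * k)
      set c2 := (k - (B.1 ∩ C.1).card + (n - 2 * k) - 1) / (n - 2 * k)
      set c3 := (k - (A.1 ∩ C.1).card + (n - 2 * k) - 1) / (n - 2 * k)
      omega
    · -- K K K
      have key := ceil_add' (x := n - k - (A.1 ∩ C.1).card) (y := n - k - (A.1 ∩ B.1).card)
        (z := n - k - (B.1 ∩ C.1).card) (s := 0) hm (by omega)
      set c1 := (n - k - (A.1 ∩ B.1).card + (n - 2 * k) - 1) / (n - 2 * k)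
      set c2 := (n - k - (B.1 ∩ C.1).card + (n - 2 * k) - 1) / (n - 2 * k)
      set c3 := (n - k - (A.1 ∩ C.1).card + (n - 2 * k) - 1) / (n - 2 * k)
      omega
  · -- d = 1 ↔ adjacent
    intro A B
    constructor
    · intro h1
      by_cases h : A.1.card = B.1.card
      · rw [dFun, if_pos h] at h1; omega
      · rw [dFun, if_neg h] at h1
        have h2 : (k - (A.1 ∩ B.1).card + (n - 2 * k) - 1) / (n - 2 * k) = 0 := by omega
        rw [Nat.div_eq_zero_iff] at h2
        have hki : k ≤ (A.1 ∩ B.1).card := by omega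
        have hne : A ≠ B := fun e => h (by rw [e])
        rcases A.2 with hA | hA
        · have hB : B.1.card = n - k := by
            rcases B.2 with hB | hB
            · exact absurd (hA.trans hB.symm) h
            · exact hB
          have hint : (A.1 ∩ B.1).card ≤ A.1.card :=
            Finset.card_le_card Finset.inter_subset_left
          have hAB : A.1 ∩ B.1 = A.1 :=
            Finset.eq_of_subset_of_card_le Finset.inter_subset_left (by omega)
          exact ⟨hne, Or.inl ⟨hA, hB, by rw [← hAB]; exact Finset.inter_subset_right⟩⟩
        · have hB : B.1.card = k := by
            rcases B.2 with hB | hB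
            · exact hB
            · exact absurd (hA.trans hB.symm) h
          have hint : (A.1 ∩ B.1).card ≤ B.1.card :=
            Finset.card_le_card Finset.inter_subset_right
          have hAB : A.1 ∩ B.1 = B.1 :=
            Finset.eq_of_subset_of_card_le Finset.inter_subset_right (by omega)
          exact ⟨hne, Or.inr ⟨hB, hA, by rw [← hAB]; exact Finset.inter_subset_left⟩⟩
    · rintro ⟨hne, hAdj | hAdj⟩
      · obtain ⟨hA, hB, hsub⟩ := hAdj
        have h : A.1.card ≠ B.1.card := by rw [hA, hB]; omega
        rw [dFun, if_neg h, Finset.inter_eq_left.mpr hsub, hA]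
        have : (k - k + (n - 2 * k) - 1) / (n - 2 * k) = 0 := Nat.div_eq_of_lt (by omega)
        rw [this]
      · obtain ⟨hB, hA, hsub⟩ := hAdj
        have h : A.1.card ≠ B.1.card := by rw [hA, hB]; omega
        rw [dFun, if_neg h, Finset.inter_eq_right.mpr hsub, hB]
        have : (k - k + (n - 2 * k) - 1) / (n - 2 * k) = 0 := Nat.div_eq_of_lt (by omega)
        rw [this]
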